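/- Let $0 < p \le 1$ and let $\{0,1\} \subseteq K_2 \subseteq K_1 \subseteq [0,1]$ with $K_2$ closed. For $x \in K_1 \setminus K_2$, let $a[x], b[x] \in K_2$ be the unique points with $x \in (a[x], b[x])$ and $(a[x], b[x]) \cap K_2 = \emptyset$. Define $f : K_1 \to L_p$-valued (or any $p$-normed space containing point masses $\delta(c)$ for $c \in K_2$ with $\|\delta(c) - \delta(c')\| = |c - c'|$ along $K_2$, and additivity of $p$-th powers of norms over consecutive intervals) via linear interpolation: $f(x) = \frac{b[x]-x}{b[x]-a[x]} \delta(a[x]) + \frac{x-a[x]}{b[x]-a[x]} \delta(b[x])$ for $x \notin K_2$ and $f(x) = \delta(x)$ for $x \in K_2$. Then for all $x < y$ in $K_1$: $\|f(x) - f(y)\|^p \le 3^{1-p} |x - y|^p$. -/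

import Mathlib

lemma aux_pow3 {p : ℝ} (hp : 0 < p) (hp1 : p ≤ 1) {a b c : ℝ}
    (ha : 0 ≤ a) (hb : 0 ≤ b) (hc : 0 ≤ c) :
    a ^ p + b ^ p + c ^ p ≤ 3 ^ (1 - p) * (a + b + c) ^ p := by
  have hq : 1 ≤ 1 / p := (le_div_iff₀ hp).2 (by linarith)
  have H := Real.rpow_arith_mean_le_arith_mean_rpow (Finset.univ : Finset (Fin 3))
    (fun _ => (1:ℝ)/3) ![a ^ p, b ^ p, c ^ p]
    (fun i _ => by norm_num) (by norm_num [Finset.sum_const])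
    (fun i _ => by fin_cases i <;> simp <;> positivity) hq
  simp only [Fin.sum_univ_three, Matrix.cons_val_zero, Matrix.cons_val_one, Matrix.head_cons,
    Matrix.cons_val_two, Matrix.tail_cons, one_div] at H
  rw [Real.rpow_rpow_inv ha hp.ne', Real.rpow_rpow_inv hb hp.ne',
    Real.rpow_rpow_inv hc hp.ne'] at H
  have hX : (0:ℝ) ≤ 3⁻¹ * a ^ p + 3⁻¹ * b ^ p + 3⁻¹ * c ^ p := by positivity
  have H2 := Real.rpow_le_rpow (Real.rpow_nonneg hX _) H hp.le
  rw [← Real.rpow_mul hX, inv_mul_cancel₀ hp.ne', Real.rpow_one] at H2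
  have hs : (0:ℝ) ≤ a + b + c := by linarith
  have h3 : (3:ℝ)⁻¹ * a + 3⁻¹ * b + 3⁻¹ * c = (a + b + c) / 3 := by ring
  rw [h3, Real.div_rpow hs (by norm_num)] at H2
  have h3p : (0:ℝ) < (3:ℝ) ^ p := Real.rpow_pos_of_pos (by norm_num) p
  have hgoal : 3 ^ (1 - p) * (a + b + c) ^ p = 3 * ((a + b + c) ^ p / 3 ^ p) := by
    rw [Real.rpow_sub (by norm_num : (0:ℝ) < 3), Real.rpow_one]
    field_simp
  rw [hgoal]
  nlinarith [H2]

lemma aux_pow2 {p : ℝ} (hp : 0 < p) (hp1 : p ≤ 1) {a b : ℝ}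
    (ha : 0 ≤ a) (hb : 0 ≤ b) :
    a ^ p + b ^ p ≤ 3 ^ (1 - p) * (a + b) ^ p := by
  have := aux_pow3 hp hp1 ha hb le_rfl (c := 0)
  simpa [Real.zero_rpow hp.ne'] using this

lemma aux_pow1 {p : ℝ} (hp : 0 < p) (hp1 : p ≤ 1) {a : ℝ} (ha : 0 ≤ a) :
    a ^ p ≤ 3 ^ (1 - p) * a ^ p := by
  have h1 : (1:ℝ) ≤ 3 ^ (1 - p) := Real.one_le_rpow (by norm_num) (by linarith)
  nlinarith [Real.rpow_nonneg ha p]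

/-- The piecewise-linear interpolation map from `K₁` into a `p`-normed space containing
an isometric copy `δ` of `K₂` satisfies `‖f(x)-f(y)‖^p ≤ 3^{1-p}|x-y|^p`. -/
theorem stmt_9
    (p : ℝ) (hp : 0 < p) (hp1 : p ≤ 1)
    (K₁ K₂ : Set ℝ) (hsub : K₂ ⊆ K₁) (hK₁ : K₁ ⊆ Set.Icc 0 1)
    (h0 : (0 : ℝ) ∈ K₂) (h1 : (1 : ℝ) ∈ K₂) (hK₂closed : IsClosed K₂)
    (Y : Type*) [AddCommGroup Y] [Module ℝ Y]
    (nY : Y → ℝ)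
    (hYnn : ∀ v, 0 ≤ nY v)
    (hYeq : ∀ v, nY v = 0 ↔ v = 0)
    (hYhom : ∀ (c : ℝ) v, nY (c • v) = |c| * nY v)
    (hYtri : ∀ v w, nY (v + w) ^ p ≤ nY v ^ p + nY w ^ p)
    (δ : ℝ → Y)
    (hδ : ∀ c ∈ K₂, ∀ c' ∈ K₂, nY (δ c - δ c') = |c - c'|)
    (A B : ℝ → ℝ)
    (hAB : ∀ x ∈ K₁ \ K₂, A x ∈ K₂ ∧ B x ∈ K₂ ∧ x ∈ Set.Ioo (A x) (B x) ∧
      Set.Ioo (A x) (B x) ∩ K₂ = ∅)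
    (f : ℝ → Y)
    (hf₂ : ∀ x ∈ K₂, f x = δ x)
    (hf₁ : ∀ x ∈ K₁ \ K₂, f x =
      ((B x - x) / (B x - A x)) • δ (A x) + ((x - A x) / (B x - A x)) • δ (B x)) :
    ∀ x ∈ K₁, ∀ y ∈ K₁, x < y →
      nY (f x - f y) ^ p ≤ (3 : ℝ) ^ (1 - p) * (y - x) ^ p := by
  -- basic facts about nY
  have nYneg : ∀ v, nY (-v) = nY v := by
    intro v
    have := hYhom (-1) v
    simpa using this
  have nYsymm : ∀ v w, nY (v - w) = nY (w - v) := by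
    intro v w
    rw [← nYneg (v - w), neg_sub]
  have tri : ∀ u v w : Y, nY (u - w) ^ p ≤ nY (u - v) ^ p + nY (v - w) ^ p := by
    intro u v w
    have := hYtri (u - v) (v - w)
    rwa [sub_add_sub_cancel] at this
  -- distances from f z to gap endpoints
  have gapA : ∀ z ∈ K₁ \ K₂, nY (f z - δ (A z)) = z - A z := by
    intro z hz
    obtain ⟨hA, hB, hzm, hgap⟩ := hAB z hz
    have hAz : A z < z := hzm.1
    have hzB : z < B z := hzm.2
    have hd : (0:ℝ) < B z - A z := by linarith
    have hco : (B z - z) / (B z - A z) = 1 - (z - A z) / (B z - A z) := by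
      field_simp
      ring
    have hfe : f z - δ (A z) = ((z - A z) / (B z - A z)) • (δ (B z) - δ (A z)) := by
      rw [hf₁ z hz, hco]; module
    rw [hfe, hYhom, hδ (B z) hB (A z) hA,
      abs_of_nonneg (div_nonneg (by linarith) hd.le), abs_of_pos hd,
      div_mul_cancel₀ _ hd.ne']
  have gapB : ∀ z ∈ K₁ \ K₂, nY (f z - δ (B z)) = B z - z := by
    intro z hz
    obtain ⟨hA, hB, hzm, hgap⟩ := hAB z hz
    have hAz : A z < z := hzm.1
    have hzB : z < B z := hzm.2
    have hd : (0:ℝ) < B z - A z := by linarith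
    have hco : (z - A z) / (B z - A z) = 1 - (B z - z) / (B z - A z) := by
      field_simp
      ring
    have hfe : f z - δ (B z) = ((B z - z) / (B z - A z)) • (δ (A z) - δ (B z)) := by
      rw [hf₁ z hz, hco]; module
    rw [hfe, hYhom, hδ (A z) hA (B z) hB, abs_of_neg (by linarith : A z - B z < 0),
      abs_of_nonneg (div_nonneg (by linarith) hd.le)]
    rw [show -(A z - B z) = B z - A z by ring, div_mul_cancel₀ _ hd.ne']
  -- points of K₂ avoid gaps
  have notgap : ∀ z ∈ K₁ \ K₂, ∀ c ∈ K₂, c ∉ Set.Ioo (A z) (B z) := by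
    intro z hz c hc hmem
    obtain ⟨_, _, _, hgap⟩ := hAB z hz
    exact Set.eq_empty_iff_forall_notMem.1 hgap c ⟨hmem, hc⟩
  have leA : ∀ z ∈ K₁ \ K₂, ∀ c ∈ K₂, c < z → c ≤ A z := by
    intro z hz c hc hcz
    obtain ⟨hA, hB, hzm, hgap⟩ := hAB z hz
    by_contra h
    exact notgap z hz c hc ⟨lt_of_not_ge h, by linarith [hzm.2]⟩
  have leB : ∀ z ∈ K₁ \ K₂, ∀ c ∈ K₂, z < c → B z ≤ c := by
    intro z hz c hc hzc
    obtain ⟨hA, hB, hzm, hgap⟩ := hAB z hz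
    by_contra h
    exact notgap z hz c hc ⟨by linarith [hzm.1], lt_of_not_ge h⟩
  intro x hx y hy hxy
  by_cases hx2 : x ∈ K₂ <;> by_cases hy2 : y ∈ K₂
  · -- both in K₂
    rw [hf₂ x hx2, hf₂ y hy2, hδ x hx2 y hy2, abs_of_neg (by linarith : x - y < 0),
      neg_sub]
    exact aux_pow1 hp hp1 (by linarith)
  · -- x ∈ K₂, y ∉ K₂
    have hy' : y ∈ K₁ \ K₂ := ⟨hy, hy2⟩
    obtain ⟨hAy, hBy, hym, _⟩ := hAB y hy'
    have hxA : x ≤ A y := leA y hy' x hx2 hxy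
    have step := tri (f x) (δ (A y)) (f y)
    have e1 : nY (f x - δ (A y)) = A y - x := by
      rw [hf₂ x hx2, hδ x hx2 (A y) hAy, abs_of_nonpos (by linarith), neg_sub]
    have e2 : nY (δ (A y) - f y) = y - A y := by
      rw [nYsymm, gapA y hy']
    rw [e1, e2] at step
    refine step.trans ?_
    have := aux_pow2 hp hp1 (by linarith : (0:ℝ) ≤ A y - x)
      (by linarith [hym.1] : (0:ℝ) ≤ y - A y)
    rwa [show A y - x + (y - A y) = y - x by ring] at this
  · -- x ∉ K₂, y ∈ K₂
    have hx' : x ∈ K₁ \ K₂ := ⟨hx, hx2⟩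
    obtain ⟨hAx, hBx, hxm, _⟩ := hAB x hx'
    have hBy : B x ≤ y := leB x hx' y hy2 hxy
    have step := tri (f x) (δ (B x)) (f y)
    have e1 : nY (f x - δ (B x)) = B x - x := gapB x hx'
    have e2 : nY (δ (B x) - f y) = y - B x := by
      rw [hf₂ y hy2, hδ (B x) hBx y hy2, abs_of_nonpos (by linarith), neg_sub]
    rw [e1, e2] at step
    refine step.trans ?_
    have := aux_pow2 hp hp1 (by linarith [hxm.2] : (0:ℝ) ≤ B x - x)
      (by linarith : (0:ℝ) ≤ y - B x)
    rwa [show B x - x + (y - B x) = y - x by ring] at this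
  · -- neither in K₂
    have hx' : x ∈ K₁ \ K₂ := ⟨hx, hx2⟩
    have hy' : y ∈ K₁ \ K₂ := ⟨hy, hy2⟩
    obtain ⟨hAx, hBx, hxm, _⟩ := hAB x hx'
    obtain ⟨hAy, hBy, hym, _⟩ := hAB y hy'
    rcases lt_or_ge y (B x) with hcase | hcase
    · -- same gap
      have hBeq : B x = B y := by
        have h1' : B y ≤ B x := by
          by_contra h
          exact notgap y hy' (B x) hBx ⟨by linarith [hym.1], lt_of_not_ge h⟩
        have h2' : B x ≤ B y := by
          by_contra h
          exact notgap x hx' (B y) hBy ⟨by linarith [hxm.1, hym.2], lt_of_not_ge h⟩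
        linarith
      have hAeq : A x = A y := by
        have h1' : A y ≤ A x := by
          by_contra h
          exact notgap x hx' (A y) hAy ⟨lt_of_not_ge h, by linarith [hym.1]⟩
        have h2' : A x ≤ A y := by
          by_contra h
          exact notgap y hy' (A x) hAx ⟨lt_of_not_ge h, by linarith [hxm.1, hym.2]⟩
        linarith
      have hd : (0:ℝ) < B y - A y := by linarith [hym.1, hym.2]
      have hfe : f x - f y = ((y - x) / (B y - A y)) • (δ (A y) - δ (B y)) := by
        rw [hf₁ x hx', hf₁ y hy', hAeq, hBeq]; module
      rw [hfe, hYhom, hδ (A y) hAy (B y) hBy, abs_of_neg (by linarith : A y - B y < 0),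
        abs_of_nonneg (div_nonneg (by linarith) hd.le),
        show -(A y - B y) = B y - A y by ring, div_mul_cancel₀ _ hd.ne']
      exact aux_pow1 hp hp1 (by linarith)
    · -- different gaps
      have hBA : B x ≤ A y := by
        by_contra h
        exact notgap y hy' (B x) hBx ⟨lt_of_not_ge h, by linarith [hym.2]⟩
      have step1 := tri (f x) (δ (B x)) (f y)
      have step2 := tri (δ (B x)) (δ (A y)) (f y)
      have e1 : nY (f x - δ (B x)) = B x - x := gapB x hx'
      have e2 : nY (δ (B x) - δ (A y)) = A y - B x := by
        rw [hδ (B x) hBx (A y) hAy, abs_of_nonpos (by linarith), neg_sub]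
      have e3 : nY (δ (A y) - f y) = y - A y := by
        rw [nYsymm, gapA y hy']
      rw [e1] at step1
      rw [e2, e3] at step2
      have chain : nY (f x - f y) ^ p ≤ (B x - x) ^ p + (A y - B x) ^ p + (y - A y) ^ p := by
        calc nY (f x - f y) ^ p ≤ (B x - x) ^ p + nY (δ (B x) - f y) ^ p := step1
          _ ≤ (B x - x) ^ p + ((A y - B x) ^ p + (y - A y) ^ p) := by linarith [step2]
          _ = (B x - x) ^ p + (A y - B x) ^ p + (y - A y) ^ p := by ring
      refine chain.trans ?_
      have := aux_pow3 hp hp1 (by linarith [hxm.2] : (0:ℝ) ≤ B x - x)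
        (by linarith : (0:ℝ) ≤ A y - B x) (by linarith [hym.1] : (0:ℝ) ≤ y - A y)
      rwa [show B x - x + (A y - B x) + (y - A y) = y - x by ring] at this
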